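/- arXiv:2109.14117 — 4 statements merged into one kernel-verified Lean document; each statement's English description precedes it below -/
import Mathlib

section
/- Let $T, L_1, \dots, L_N$ be random variables each with variance 1, $N \geq 1$. Define $r_{TL}^{(ave)} = \frac{1}{N}\sum_{i=1}^N \mathrm{Corr}(T, L_i)$ and $r_{LL}^{(ave)} = \frac{2}{N(N-1)}\sum_{i<j} \mathrm{Corr}(L_i, L_j)$ (with the convention $r_{LL}^{(ave)} \cdot N(N-1) = 2\sum_{i<j}\mathrm{Corr}(L_i,L_j)$, valid for any $N \ge 1$). Then $\left(r_{TL}^{(ave)}\right)^2 \leq \frac{(N-1)\, r_{LL}^{(ave)} + 1}{N}$, i.e. $-\sqrt{\frac{(N-1) r_{LL}^{(ave)}+1}{N}} \leq r_{TL}^{(ave)} \leq \sqrt{\frac{(N-1) r_{LL}^{(ave)}+1}{N}}$. -/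
open MeasureTheory ProbabilityTheory

section Aux
variable {Ω : Type*} [MeasurableSpace Ω] {μ : Measure Ω}

lemma my_integrable_mul [IsFiniteMeasure μ] {f g : Ω → ℝ}
    (hf : MemLp f 2 μ) (hg : MemLp g 2 μ) :
    Integrable (fun ω => f ω * g ω) μ := by
  refine (hf.integrable_sq.add hg.integrable_sq).mono'
    (hf.aestronglyMeasurable.mul hg.aestronglyMeasurable) ?_
  filter_upwards with ω
  simp only [Real.norm_eq_abs, abs_mul, Pi.add_apply]
  nlinarith [sq_nonneg (|f ω| - |g ω|), sq_abs (f ω), sq_abs (g ω),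
    abs_nonneg (f ω), abs_nonneg (g ω)]

lemma my_cauchy_schwarz [IsFiniteMeasure μ] {f g : Ω → ℝ}
    (hf : MemLp f 2 μ) (hg : MemLp g 2 μ) :
    (∫ ω, f ω * g ω ∂μ) ^ 2 ≤ (∫ ω, f ω ^ 2 ∂μ) * (∫ ω, g ω ^ 2 ∂μ) := by
  set F : Lp ℝ 2 μ := hf.toLp f
  set G : Lp ℝ 2 μ := hg.toLp g
  have hFG : ∫ ω, f ω * g ω ∂μ = @inner ℝ _ _ F G := by
    rw [MeasureTheory.L2.inner_def]
    refine integral_congr_ae ?_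
    filter_upwards [hf.coeFn_toLp, hg.coeFn_toLp] with ω h1 h2
    simp [F, G, h1, h2, RCLike.inner_apply, mul_comm]
  have hFF : ∫ ω, f ω ^ 2 ∂μ = @inner ℝ _ _ F F := by
    rw [MeasureTheory.L2.inner_def]
    refine integral_congr_ae ?_
    filter_upwards [hf.coeFn_toLp] with ω h1
    simp [F, h1, RCLike.inner_apply, sq]
  have hGG : ∫ ω, g ω ^ 2 ∂μ = @inner ℝ _ _ G G := by
    rw [MeasureTheory.L2.inner_def]
    refine integral_congr_ae ?_
    filter_upwards [hg.coeFn_toLp] with ω h1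
    simp [G, h1, RCLike.inner_apply, sq]
  rw [hFG, hFF, hGG, real_inner_self_eq_norm_sq, real_inner_self_eq_norm_sq]
  calc (@inner ℝ _ _ F G) ^ 2 ≤ (‖F‖ * ‖G‖) ^ 2 := by
        have := abs_real_inner_le_norm F G
        nlinarith [abs_nonneg (@inner ℝ _ _ F G), le_abs_self (@inner ℝ _ _ F G),
          neg_abs_le (@inner ℝ _ _ F G)]
    _ = ‖F‖ ^ 2 * ‖G‖ ^ 2 := by ring

end Aux

/-- Covariance of two real random variables. -/
noncomputable def cov {Ω : Type*} [MeasurableSpace Ω] (μ : Measure Ω) (f g : Ω → ℝ) : ℝ :=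
  ∫ ω, (f ω - ∫ x, f x ∂μ) * (g ω - ∫ x, g x ∂μ) ∂μ

/-- Pearson correlation of two real random variables. -/
noncomputable def corr {Ω : Type*} [MeasurableSpace Ω] (μ : Measure Ω) (f g : Ω → ℝ) : ℝ :=
  cov μ f g / Real.sqrt (variance f μ * variance g μ)

theorem stmt2 {Ω : Type*} [MeasurableSpace Ω] (μ : Measure Ω) [IsProbabilityMeasure μ]
    (N : ℕ) (hN : 1 ≤ N) (T : Ω → ℝ) (L : Fin N → Ω → ℝ)
    (hTmem : MemLp T 2 μ) (hmem : ∀ i, MemLp (L i) 2 μ)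
    (hTvar : variance T μ = 1) (hvar : ∀ i, variance (L i) μ = 1) :
    ((1 / (N : ℝ)) * ∑ i : Fin N, corr μ T (L i)) ^ 2 ≤
      ((N - 1 : ℝ) *
          ((2 / (N * (N - 1) : ℝ)) *
            ∑ i : Fin N, ∑ j ∈ Finset.univ.filter (fun j => i < j), corr μ (L i) (L j)) + 1) /
        N := by
  classical
  set t : Ω → ℝ := fun ω => T ω - ∫ x, T x ∂μ with htdef
  set l : Fin N → Ω → ℝ := fun i ω => L i ω - ∫ x, L i x ∂μ with hldef
  have ht : MemLp t 2 μ := hTmem.sub (memLp_const _)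
  have hl : ∀ i, MemLp (l i) 2 μ := fun i => (hmem i).sub (memLp_const _)
  set S : Ω → ℝ := fun ω => ∑ i, l i ω with hSdef
  have hS : MemLp S 2 μ := memLp_finset_sum _ (fun i _ => hl i)
  -- variance rewrites
  have hvt : ∫ ω, t ω ^ 2 ∂μ = 1 := by
    rw [← hTvar, variance_eq_integral hTmem.aestronglyMeasurable.aemeasurable]
  have hvl : ∀ i, ∫ ω, l i ω ^ 2 ∂μ = 1 := by
    intro i; rw [← hvar i, variance_eq_integral (hmem i).aestronglyMeasurable.aemeasurable]
  -- corr rewrites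
  have hcorrT : ∀ i, corr μ T (L i) = ∫ ω, t ω * l i ω ∂μ := by
    intro i
    simp only [corr, cov, hTvar, hvar i, mul_one, Real.sqrt_one, div_one]; rfl
  have hcorrL : ∀ i j, corr μ (L i) (L j) = ∫ ω, l i ω * l j ω ∂μ := by
    intro i j
    simp only [corr, cov, hvar i, hvar j, mul_one, Real.sqrt_one, div_one]; rfl
  set c : Fin N → Fin N → ℝ := fun i j => ∫ ω, l i ω * l j ω ∂μ with hcdef
  have csymm : ∀ i j, c i j = c j i := by
    intro i j; simp only [c]; congr 1; ext ω; ring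
  -- key: Cauchy-Schwarz
  have key := my_cauchy_schwarz hS ht
  have h1 : ∫ ω, S ω * t ω ∂μ = ∑ i, ∫ ω, t ω * l i ω ∂μ := by
    have : ∀ ω, S ω * t ω = ∑ i, l i ω * t ω := by
      intro ω; simp only [S, Finset.sum_mul]
    simp_rw [this]
    rw [integral_finset_sum _ (fun i _ => my_integrable_mul (hl i) ht)]
    exact Finset.sum_congr rfl fun i _ => by congr 1; ext ω; ring
  have h2 : ∫ ω, S ω ^ 2 ∂μ = ∑ i, ∑ j, c i j := by
    have : ∀ ω, S ω ^ 2 = ∑ i, ∑ j, l i ω * l j ω := by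
      intro ω; simp only [S, sq, Finset.sum_mul_sum]
    simp_rw [this]
    rw [integral_finset_sum _ (fun i _ =>
      integrable_finset_sum _ (fun j _ => my_integrable_mul (hl i) (hl j)))]
    exact Finset.sum_congr rfl fun i _ =>
      integral_finset_sum _ (fun j _ => my_integrable_mul (hl i) (hl j))
  -- double sum split
  have hsplit : ∑ i, ∑ j, c i j
      = (N : ℝ) + 2 * ∑ i, ∑ j ∈ Finset.univ.filter (fun j => i < j), c i j := by
    have hdiag : ∀ i, c i i = 1 := fun i => by
      rw [show c i i = ∫ ω, l i ω ^ 2 ∂μ from by simp [c, sq]]; exact hvl i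
    have step1 : ∀ i : Fin N, ∑ j, c i j
        = (∑ j ∈ Finset.univ.filter (fun j => i < j), c i j)
          + ((∑ j ∈ Finset.univ.filter (fun j => j < i), c i j) + 1) := by
      intro i
      rw [← Finset.sum_filter_add_sum_filter_not Finset.univ (fun j => i < j)]
      congr 1
      have hset : Finset.univ.filter (fun j => ¬ i < j)
          = insert i (Finset.univ.filter (fun j => j < i)) := by
        ext j
        simp only [Finset.mem_filter, Finset.mem_univ, true_and, Finset.mem_insert, not_lt]
        constructor
        · intro h; rcases h.lt_or_eq with h' | h'
          · exact Or.inr h'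
          · exact Or.inl h'
        · rintro (rfl | h) <;> [exact le_refl _; exact le_of_lt h]
      rw [hset, Finset.sum_insert (by simp), hdiag i, add_comm]
    have hBA : (∑ i, ∑ j ∈ Finset.univ.filter (fun j => j < i), c i j)
        = ∑ i, ∑ j ∈ Finset.univ.filter (fun j => i < j), c i j := by
      simp_rw [Finset.sum_filter]
      rw [Finset.sum_comm]
      refine Finset.sum_congr rfl fun a _ => Finset.sum_congr rfl fun b _ => ?_
      by_cases h : a < b <;> simp [h, csymm a b]
    calc ∑ i, ∑ j, c i j
        = ∑ i : Fin N, ((∑ j ∈ Finset.univ.filter (fun j => i < j), c i j)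
          + ((∑ j ∈ Finset.univ.filter (fun j => j < i), c i j) + 1)) :=
          Finset.sum_congr rfl fun i _ => step1 i
      _ = (N : ℝ) + 2 * ∑ i, ∑ j ∈ Finset.univ.filter (fun j => i < j), c i j := by
          simp only [Finset.sum_add_distrib, Finset.sum_const, Finset.card_univ,
            Fintype.card_fin, nsmul_eq_mul, mul_one, hBA]
          ring
  -- assemble
  set A : ℝ := ∑ i, corr μ T (L i) with hA
  set P : ℝ := ∑ i : Fin N, ∑ j ∈ Finset.univ.filter (fun j => i < j), corr μ (L i) (L j) with hP
  have hPc : P = ∑ i, ∑ j ∈ Finset.univ.filter (fun j => i < j), c i j := by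
    simp_rw [hP, hcorrL]; rfl
  have hkey : A ^ 2 ≤ (N : ℝ) + 2 * P := by
    have hAe : A = ∫ ω, S ω * t ω ∂μ := by
      rw [h1, hA]; exact Finset.sum_congr rfl fun i _ => hcorrT i
    rw [hAe, hPc]
    calc (∫ ω, S ω * t ω ∂μ) ^ 2 ≤ (∫ ω, S ω ^ 2 ∂μ) * (∫ ω, t ω ^ 2 ∂μ) := key
      _ = (N : ℝ) + 2 * ∑ i, ∑ j ∈ Finset.univ.filter (fun j => i < j), c i j := by
          rw [hvt, h2, hsplit, mul_one]
  -- final arithmetic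
  rcases eq_or_lt_of_le hN with hN1 | hN2
  · -- N = 1
    have hNval : N = 1 := hN1.symm
    subst hNval
    have hP0 : P = 0 := by
      rw [hP]
      refine Finset.sum_eq_zero fun i _ => Finset.sum_eq_zero fun j hj => ?_
      simp only [Finset.mem_filter] at hj
      exact absurd hj.2 (by omega)
    rw [hP0] at hkey ⊢
    norm_num at hkey ⊢
    linarith
  · -- N ≥ 2
    have hN2' : (2 : ℝ) ≤ N := by exact_mod_cast hN2
    have hN0 : (0 : ℝ) < N := by linarith
    have hN1' : (0 : ℝ) < (N : ℝ) - 1 := by linarith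
    have hterm : ((N : ℝ) - 1) * ((2 / (N * (N - 1) : ℝ)) * P) = 2 * P / N := by
      field_simp
    rw [hterm]
    have : ((1 : ℝ) / N * A) ^ 2 = A ^ 2 / N ^ 2 := by ring
    rw [this]
    have hrhs : (2 * P / (N : ℝ) + 1) / N = ((N : ℝ) + 2 * P) / N ^ 2 := by
      field_simp
      ring
    rw [hrhs]
    exact div_le_div_of_nonneg_right hkey (by positivity) |>.trans_eq rfl
end

section
/- Let $T$ and $L$ be $\{0,1\}$-valued random variables with $\alpha = P(T=1) \in (0,1)$ and accuracy $p = P(T=L) > 0$. Suppose $\beta = P(T=1,L=1)/p = 1/2$, i.e. $P(T=1,L=1) = P(T=0,L=0)$. Assume $0 < P(L=1) < 1$. Then the accuracy satisfies $p = 2\alpha(1-\alpha)(1 + r_{T,L})$, where $r_{T,L}$ is the Pearson correlation between $T$ and $L$. -/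
open MeasureTheory ProbabilityTheory

theorem stmt8 {Ω : Type*} [MeasurableSpace Ω] (μ : Measure Ω) [IsProbabilityMeasure μ]
    (T L : Ω → ℝ) (hTm : Measurable T) (hLm : Measurable L)
    (hT01 : ∀ ω, T ω = 0 ∨ T ω = 1) (hL01 : ∀ ω, L ω = 0 ∨ L ω = 1)
    (α p : ℝ)
    (hα : α = (μ {ω | T ω = 1}).toReal)
    (hp : p = (μ {ω | T ω = L ω}).toReal)
    (hβ : (μ {ω | T ω = 1 ∧ L ω = 1}).toReal / p = 1 / 2)
    (hα0 : 0 < α) (hα1 : α < 1) (hp0 : 0 < p)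
    (hL0 : 0 < (μ {ω | L ω = 1}).toReal) (hL1 : (μ {ω | L ω = 1}).toReal < 1) :
    p = 2 * α * (1 - α) * (1 + corr μ T L) := by
  set A : Set Ω := {ω | T ω = 1} with hAdef
  set B : Set Ω := {ω | L ω = 1} with hBdef
  have hA : MeasurableSet A := hTm (measurableSet_singleton 1)
  have hB : MeasurableSet B := hLm (measurableSet_singleton 1)
  have hTfun : T = A.indicator (fun _ => (1:ℝ)) := by
    funext ω
    rcases hT01 ω with h | h
    · rw [h, Set.indicator_of_notMem]; simp [hAdef, h]
    · rw [h, Set.indicator_of_mem]; exact h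
  have hLfun : L = B.indicator (fun _ => (1:ℝ)) := by
    funext ω
    rcases hL01 ω with h | h
    · rw [h, Set.indicator_of_notMem]; simp [hBdef, h]
    · rw [h, Set.indicator_of_mem]; exact h
  have hTLfun : (fun ω => T ω * L ω) = (A ∩ B).indicator (fun _ => (1:ℝ)) := by
    funext ω
    rcases hT01 ω with h1 | h1 <;> rcases hL01 ω with h2 | h2 <;>
      simp [Set.indicator_apply, hAdef, hBdef, h1, h2]
  -- abbreviations
  set aR : ℝ := (μ (A ∩ B)).toReal with haRdef
  set bR : ℝ := (μ (A \ B)).toReal with hbRdef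
  set cR : ℝ := (μ (B \ A)).toReal with hcRdef
  set dR : ℝ := (μ (Aᶜ \ B)).toReal with hdRdef
  set qR : ℝ := (μ B).toReal with hqRdef
  have hfin : ∀ s : Set Ω, μ s ≠ ⊤ := fun s => measure_ne_top μ s
  -- α = aR + bR
  have h1 : α = aR + bR := by
    rw [hα, ← measure_inter_add_diff A hB, ENNReal.toReal_add (hfin _) (hfin _)]
  -- qR = aR + cR
  have h2 : qR = aR + cR := by
    rw [hqRdef, ← measure_inter_add_diff B hA, Set.inter_comm B A,
      ENNReal.toReal_add (hfin _) (hfin _)]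
  -- α + cR + dR = 1
  have h3 : α + (cR + dR) = 1 := by
    have hc : μ (Aᶜ ∩ B) + μ (Aᶜ \ B) = μ Aᶜ := measure_inter_add_diff Aᶜ hB
    have hAc : μ A + μ Aᶜ = 1 := by
      rw [measure_add_measure_compl hA, measure_univ]
    have hAcB : Aᶜ ∩ B = B \ A := by ext ω; simp [Set.mem_diff, and_comm]
    have hc' : (μ (Aᶜ ∩ B)).toReal + (μ (Aᶜ \ B)).toReal = (μ Aᶜ).toReal := by
      rw [← ENNReal.toReal_add (hfin _) (hfin _), hc]
    have hAc' : (μ A).toReal + (μ Aᶜ).toReal = 1 := by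
      rw [← ENNReal.toReal_add (hfin _) (hfin _), hAc]; simp
    rw [hAcB] at hc'
    rw [hα, hcRdef, hdRdef]
    linarith
  -- p = aR + dR
  have h4 : p = aR + dR := by
    have hset : {ω | T ω = L ω} = (A ∩ B) ∪ (Aᶜ \ B) := by
      ext ω
      rcases hT01 ω with h1 | h1 <;> rcases hL01 ω with h2 | h2 <;>
        simp [hAdef, hBdef, h1, h2]
    have hdisj : Disjoint (A ∩ B) (Aᶜ \ B) :=
      (disjoint_compl_right).mono Set.inter_subset_left Set.diff_subset
    rw [hp, hset, measure_union hdisj (hA.compl.diff hB),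
      ENNReal.toReal_add (hfin _) (hfin _)]
  -- aR = p / 2
  have h5 : aR = p / 2 := by
    have hsetβ : {ω | T ω = 1 ∧ L ω = 1} = A ∩ B := by
      ext ω; simp [hAdef, hBdef]
    rw [hsetβ] at hβ
    field_simp at hβ
    linarith
  -- qR = 1 - α
  have hq : qR = 1 - α := by linarith
  -- integrals
  have hTint : Integrable T μ := hTfun ▸ (integrable_const (1:ℝ)).indicator hA
  have hLint : Integrable L μ := hLfun ▸ (integrable_const (1:ℝ)).indicator hB
  have hTLint : Integrable (fun ω => T ω * L ω) μ :=
    hTLfun ▸ (integrable_const (1:ℝ)).indicator (hA.inter hB)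
  have hET : ∫ x, T x ∂μ = α := by
    rw [hTfun, integral_indicator_const (1:ℝ) hA, smul_eq_mul, mul_one, hα]; rfl
  have hEL : ∫ x, L x ∂μ = qR := by
    rw [hLfun, integral_indicator_const (1:ℝ) hB, smul_eq_mul, mul_one, hqRdef]; rfl
  have hETL : ∫ x, T x * L x ∂μ = aR := by
    rw [show (fun x => T x * L x) = (A ∩ B).indicator (fun _ => (1:ℝ)) from hTLfun,
      integral_indicator_const (1:ℝ) (hA.inter hB), smul_eq_mul, mul_one, haRdef]; rfl
  -- variances
  have hTmem : MemLp T 2 μ :=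
    MemLp.of_bound hTint.aestronglyMeasurable 1
      (ae_of_all _ fun ω => by rcases hT01 ω with h | h <;> simp [h])
  have hLmem : MemLp L 2 μ :=
    MemLp.of_bound hLint.aestronglyMeasurable 1
      (ae_of_all _ fun ω => by rcases hL01 ω with h | h <;> simp [h])
  have hvarT : variance T μ = α - α ^ 2 := by
    rw [ProbabilityTheory.variance_eq_sub hTmem]
    have : ∀ ω, T ω ^ 2 = T ω := fun ω => by rcases hT01 ω with h | h <;> simp [h]
    simp only [Pi.pow_apply]
    simp_rw [this]
    rw [hET]
  have hvarL : variance L μ = qR - qR ^ 2 := by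
    rw [ProbabilityTheory.variance_eq_sub hLmem]
    have : ∀ ω, L ω ^ 2 = L ω := fun ω => by rcases hL01 ω with h | h <;> simp [h]
    simp only [Pi.pow_apply]
    simp_rw [this]
    rw [hEL]
  -- covariance
  have hcov : cov μ T L = aR - α * qR := by
    rw [cov, hET, hEL]
    have hexp : ∀ ω, (T ω - α) * (L ω - qR)
        = (T ω * L ω - α * L ω) - (qR * T ω - α * qR) := fun ω => by ring
    simp_rw [hexp]
    have i1 : Integrable (fun ω => T ω * L ω - α * L ω) μ :=
      hTLint.sub (hLint.const_mul α)
    have i2 : Integrable (fun ω => qR * T ω - α * qR) μ :=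
      (hTint.const_mul qR).sub (integrable_const _)
    have i3 : Integrable (fun ω => α * L ω) μ := hLint.const_mul α
    have i4 : Integrable (fun ω => qR * T ω) μ := hTint.const_mul qR
    rw [integral_sub i1 i2,
      integral_sub hTLint i3,
      integral_sub i4 (integrable_const _),
      integral_const_mul, integral_const_mul, hETL, hET, hEL, integral_const]
    simp [measure_univ]
    ring
  -- put it together
  have hαpos : (0:ℝ) < α * (1 - α) := mul_pos hα0 (by linarith)
  have hsqrt : Real.sqrt (variance T μ * variance L μ) = α * (1 - α) := by
    rw [hvarT, hvarL, hq,
      show (α - α ^ 2) * ((1 - α) - (1 - α) ^ 2) = (α * (1 - α)) ^ 2 by ring,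
      Real.sqrt_sq hαpos.le]
  rw [corr, hsqrt, hcov, hq, h5]
  have hα1' : (1:ℝ) - α ≠ 0 := by linarith
  have hα0' : α ≠ 0 := hα0.ne'
  field_simp
  ring
end

section
/- Let $T$ and $L$ be $\{0,1\}$-valued random variables with $\alpha = P(T=1) \in (0,1)$, accuracy $p = P(T=L) > 0$, $\beta = P(T=1,L=1)/p = 1/2$, and $0 < P(L=1) < 1$. Then the accuracy $p$ is a strictly increasing affine function of $r_{T,L}$: namely $p = 2\alpha(1-\alpha) + 2\alpha(1-\alpha) r_{T,L}$ with slope $2\alpha(1-\alpha) > 0$. -/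
set_option maxHeartbeats 1000000


open MeasureTheory ProbabilityTheory

theorem stmt10 {Ω : Type*} [MeasurableSpace Ω] (μ : Measure Ω) [IsProbabilityMeasure μ]
    (T L : Ω → ℝ) (hTm : Measurable T) (hLm : Measurable L)
    (hT01 : ∀ ω, T ω = 0 ∨ T ω = 1) (hL01 : ∀ ω, L ω = 0 ∨ L ω = 1)
    (α p : ℝ)
    (hα : α = (μ {ω | T ω = 1}).toReal)
    (hp : p = (μ {ω | T ω = L ω}).toReal)
    (hβ : (μ {ω | T ω = 1 ∧ L ω = 1}).toReal / p = 1 / 2)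
    (hα0 : 0 < α) (hα1 : α < 1) (hp0 : 0 < p)
    (hL0 : 0 < (μ {ω | L ω = 1}).toReal) (hL1 : (μ {ω | L ω = 1}).toReal < 1) :
    p = 2 * α * (1 - α) + 2 * α * (1 - α) * corr μ T L ∧ 0 < 2 * α * (1 - α) := by
  set A : Set Ω := {ω | T ω = 1} with hAdef
  set B : Set Ω := {ω | L ω = 1} with hBdef
  have hA : MeasurableSet A := hTm (measurableSet_singleton 1)
  have hB : MeasurableSet B := hLm (measurableSet_singleton 1)
  have hTind : T = A.indicator (fun _ => (1:ℝ)) := by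
    funext ω
    rcases hT01 ω with h | h
    · rw [Set.indicator_of_notMem]
      · exact h
      · simp only [hAdef, Set.mem_setOf_eq, h]; norm_num
    · rw [Set.indicator_of_mem]
      · exact h
      · exact h
  have hLind : L = B.indicator (fun _ => (1:ℝ)) := by
    funext ω
    rcases hL01 ω with h | h
    · rw [Set.indicator_of_notMem]
      · exact h
      · simp only [hBdef, Set.mem_setOf_eq, h]; norm_num
    · rw [Set.indicator_of_mem]
      · exact h
      · exact h
  have hTLind : (fun ω => T ω * L ω) = (A ∩ B).indicator (fun _ => (1:ℝ)) := by
    funext ω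
    by_cases hmem : ω ∈ A ∩ B
    · rw [Set.indicator_of_mem hmem]
      have h1 : T ω = 1 := hmem.1
      have h2 : L ω = 1 := hmem.2
      rw [h1, h2]; ring
    · rw [Set.indicator_of_notMem hmem]
      rcases hT01 ω with h | h
      · rw [h]; ring
      · rcases hL01 ω with h2 | h2
        · rw [h2]; ring
        · exact absurd ⟨h, h2⟩ hmem
  -- integrability
  have iT : Integrable T μ := by
    rw [hTind]; exact (integrable_const (1:ℝ)).indicator hA
  have iL : Integrable L μ := by
    rw [hLind]; exact (integrable_const (1:ℝ)).indicator hB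
  have iTL : Integrable (fun ω => T ω * L ω) μ := by
    rw [hTLind]; exact (integrable_const (1:ℝ)).indicator (hA.inter hB)
  -- expectations
  have ET : ∫ ω, T ω ∂μ = (μ A).toReal := by
    rw [hTind, integral_indicator_const _ hA]; simp; rfl
  have EL : ∫ ω, L ω ∂μ = (μ B).toReal := by
    rw [hLind, integral_indicator_const _ hB]; simp; rfl
  have ETL : ∫ ω, T ω * L ω ∂μ = (μ (A ∩ B)).toReal := by
    rw [hTLind, integral_indicator_const _ (hA.inter hB)]; simp; rfl
  -- covariance formula
  have hcov : cov μ T L = (μ (A ∩ B)).toReal - (μ A).toReal * (μ B).toReal := by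
    unfold cov
    have h1 : ∀ ω, (T ω - ∫ x, T x ∂μ) * (L ω - ∫ x, L x ∂μ)
        = T ω * L ω - (∫ x, T x ∂μ) * L ω - (∫ x, L x ∂μ) * T ω
          + (∫ x, T x ∂μ) * (∫ x, L x ∂μ) := by intro ω; ring
    simp_rw [h1]
    set mT := ∫ x, T x ∂μ with hmT
    set mL := ∫ x, L x ∂μ with hmL
    have i1 : Integrable (fun ω => T ω * L ω - mT * L ω) μ := iTL.sub (iL.const_mul mT)
    have i2 : Integrable (fun ω => T ω * L ω - mT * L ω - mL * T ω) μ :=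
      i1.sub (iT.const_mul mL)
    rw [integral_add i2 (integrable_const _), integral_sub i1 (iT.const_mul mL),
        integral_sub iTL (iL.const_mul mT), integral_const_mul, integral_const_mul,
        integral_const, ETL]
    rw [← hmT, ← hmL]
    rw [ET, EL]
    simp
    ring
  -- variances
  have hmemT : MemLp T 2 μ := by
    rw [hTind]; exact memLp_indicator_const 2 hA 1 (Or.inr (measure_ne_top μ A))
  have hmemL : MemLp L 2 μ := by
    rw [hLind]; exact memLp_indicator_const 2 hB 1 (Or.inr (measure_ne_top μ B))
  have hTsq : T ^ 2 = T := by
    funext ω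
    rcases hT01 ω with h | h <;> simp [h]
  have hLsq : L ^ 2 = L := by
    funext ω
    rcases hL01 ω with h | h <;> simp [h]
  have hvarT : variance T μ = (μ A).toReal - (μ A).toReal ^ 2 := by
    rw [variance_eq_sub hmemT, hTsq]
    simp only [ET]
  have hvarL : variance L μ = (μ B).toReal - (μ B).toReal ^ 2 := by
    rw [variance_eq_sub hmemL, hLsq]
    simp only [EL]
  -- measure arithmetic
  have addReal : ∀ s t : Set Ω, Disjoint s t → MeasurableSet t →
      (μ (s ∪ t)).toReal = (μ s).toReal + (μ t).toReal := by
    intro s t hd ht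
    rw [measure_union hd ht, ENNReal.toReal_add (measure_ne_top μ s) (measure_ne_top μ t)]
  set a := (μ (A ∩ B)).toReal with ha
  set b := (μ (A ∩ Bᶜ)).toReal with hb
  set c := (μ (Aᶜ ∩ B)).toReal with hc
  set d := (μ (Aᶜ ∩ Bᶜ)).toReal with hd
  have hAsplit : (μ A).toReal = a + b := by
    have : A ∩ B ∪ A ∩ Bᶜ = A := Set.inter_union_compl A B
    rw [← this, addReal _ _ (by
      exact Set.disjoint_of_subset (Set.inter_subset_right) (Set.inter_subset_right)
        disjoint_compl_right) (hA.inter hB.compl)]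
  have hBsplit : (μ B).toReal = a + c := by
    have : A ∩ B ∪ Aᶜ ∩ B = B := by
      rw [Set.inter_comm A B, Set.inter_comm Aᶜ B]; exact Set.inter_union_compl B A
    rw [← this, addReal _ _ (by
      exact Set.disjoint_of_subset (Set.inter_subset_left) (Set.inter_subset_left)
        disjoint_compl_right) (hA.compl.inter hB)]
  have hAc : (μ Aᶜ).toReal = 1 - (μ A).toReal := by
    rw [measure_compl hA (measure_ne_top μ A)]
    rw [ENNReal.toReal_sub_of_le (measure_mono (Set.subset_univ A)) (measure_ne_top μ _)]
    simp
  have hAcsplit : (μ Aᶜ).toReal = c + d := by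
    have : Aᶜ ∩ B ∪ Aᶜ ∩ Bᶜ = Aᶜ := Set.inter_union_compl Aᶜ B
    rw [← this, addReal _ _ (by
      exact Set.disjoint_of_subset (Set.inter_subset_right) (Set.inter_subset_right)
        disjoint_compl_right) (hA.compl.inter hB.compl)]
  have hpsplit : p = a + d := by
    have hset : {ω | T ω = L ω} = (A ∩ B) ∪ (Aᶜ ∩ Bᶜ) := by
      ext ω
      simp only [Set.mem_setOf_eq, Set.mem_union, Set.mem_inter_iff, Set.mem_compl_iff,
        hAdef, hBdef]
      rcases hT01 ω with h | h <;> rcases hL01 ω with h2 | h2 <;> simp [h, h2]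
    rw [hp, hset, addReal _ _ (by
      exact Set.disjoint_of_subset (Set.inter_subset_left) (Set.inter_subset_left)
        disjoint_compl_right) (hA.compl.inter hB.compl)]
  have hAB : {ω | T ω = 1 ∧ L ω = 1} = A ∩ B := rfl
  have hahalf : a = p / 2 := by
    rw [hAB] at hβ
    field_simp at hβ
    linarith [hβ]
  have hαab : α = a + b := by rw [hα]; exact hAsplit
  have hsum : 1 - α = c + d := by
    rw [hα, ← hAc]; exact hAcsplit
  have hlam : (μ B).toReal = 1 - α := by
    rw [hBsplit]
    have hd2 : d = p / 2 := by linarith [hpsplit, hahalf]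
    linarith [hsum, hahalf]
  -- wrap up
  have hpos : 0 < 2 * α * (1 - α) := by nlinarith
  refine ⟨?_, hpos⟩
  have hcorr : corr μ T L = (a - α * (1 - α)) / (α * (1 - α)) := by
    unfold corr
    rw [hcov, hvarT, hvarL, hlam, ← hα]
    have : (α - α ^ 2) * ((1 - α) - (1 - α) ^ 2) = (α * (1 - α)) ^ 2 := by ring
    rw [this, Real.sqrt_sq (by nlinarith)]
  rw [hcorr]
  have hne : α * (1 - α) ≠ 0 := by nlinarith
  field_simp
  rw [eq_div_iff (by linarith)]; nlinarith [hahalf]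
end

section
/- Let $T, L_1, \dots, L_N$ be unit-variance random variables such that $\mathrm{Corr}(T, L_i) = r$ for all $i$ and $\mathrm{Corr}(L_i, L_j) = c$ for all $i \neq j$ (a homogeneous ensemble). Then $r^2 \leq \frac{(N-1)c + 1}{N}$. -/
open MeasureTheory ProbabilityTheory
open scoped RealInnerProductSpace

lemma inner_toLp_eq {Ω : Type*} [MeasurableSpace Ω] {μ : Measure Ω} {f g : Ω → ℝ}
    (hf : MemLp f 2 μ) (hg : MemLp g 2 μ) :
    ⟪hf.toLp f, hg.toLp g⟫ = ∫ ω, f ω * g ω ∂μ := by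
  rw [MeasureTheory.L2.inner_def]
  apply integral_congr_ae
  filter_upwards [hf.coeFn_toLp, hg.coeFn_toLp] with ω h1 h2
  simp [h1, h2, RCLike.inner_apply, mul_comm]

lemma variance_eq_integral_mul {Ω : Type*} [MeasurableSpace Ω] {μ : Measure Ω}
    [IsProbabilityMeasure μ] {f : Ω → ℝ} (hf : MemLp f 2 μ) :
    variance f μ = ∫ ω, (f ω - ∫ x, f x ∂μ) * (f ω - ∫ x, f x ∂μ) ∂μ := by
  rw [variance_eq_integral hf.aestronglyMeasurable.aemeasurable]
  apply integral_congr_ae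
  filter_upwards with ω
  simp [sq]

theorem stmt13 {Ω : Type*} [MeasurableSpace Ω] (μ : Measure Ω) [IsProbabilityMeasure μ]
    (N : ℕ) (hN : 1 ≤ N) (T : Ω → ℝ) (L : Fin N → Ω → ℝ)
    (hTmem : MemLp T 2 μ) (hmem : ∀ i, MemLp (L i) 2 μ)
    (hTvar : variance T μ = 1) (hvar : ∀ i, variance (L i) μ = 1)
    (r c : ℝ)
    (hr : ∀ i, corr μ T (L i) = r)
    (hc : ∀ i j, i ≠ j → corr μ (L i) (L j) = c) :
    r ^ 2 ≤ ((N - 1 : ℝ) * c + 1) / N := by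
  have hNpos : (0:ℝ) < N := by exact_mod_cast hN
  have hX : MemLp (fun ω => T ω - ∫ x, T x ∂μ) 2 μ := hTmem.sub (memLp_const _)
  have hY : ∀ i, MemLp (fun ω => L i ω - ∫ x, L i x ∂μ) 2 μ :=
    fun i => (hmem i).sub (memLp_const _)
  set x := hX.toLp _ with hxdef
  set y : Fin N → Lp ℝ 2 μ := fun i => (hY i).toLp _ with hydef
  have hxy : ∀ i, ⟪x, y i⟫ = r := by
    intro i
    have h := hr i
    rw [corr, hTvar, hvar i] at h
    simp only [one_mul, Real.sqrt_one, div_one] at h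
    rw [hxdef, hydef, inner_toLp_eq]
    exact h
  have hyy : ∀ i j, i ≠ j → ⟪y i, y j⟫ = c := by
    intro i j hij
    have h := hc i j hij
    rw [corr, hvar i, hvar j] at h
    simp only [one_mul, Real.sqrt_one, div_one] at h
    rw [hydef, inner_toLp_eq]
    exact h
  have hxx : ⟪x, x⟫ = 1 := by
    rw [hxdef, inner_toLp_eq, ← variance_eq_integral_mul hTmem, hTvar]
  have hyyi : ∀ i, ⟪y i, y i⟫ = 1 := by
    intro i
    rw [hydef, inner_toLp_eq, ← variance_eq_integral_mul (hmem i), hvar i]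
  set s := ∑ i, y i with hsdef
  have h1 : ⟪x, s⟫ = N * r := by
    rw [hsdef, inner_sum]
    simp [hxy, Finset.card_univ, mul_comm]
  have h2 : ⟪s, s⟫ = N * ((N - 1 : ℝ) * c + 1) := by
    rw [hsdef, sum_inner]
    have key : ∀ i : Fin N, ⟪y i, ∑ j, y j⟫ = (N - 1 : ℝ) * c + 1 := by
      intro i
      rw [inner_sum, ← Finset.add_sum_erase _ _ (Finset.mem_univ i), hyyi i]
      have : ∑ j ∈ Finset.univ.erase i, ⟪y i, y j⟫ = (N - 1 : ℝ) * c := by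
        rw [Finset.sum_congr rfl fun j hj => hyy i j (Finset.ne_of_mem_erase hj).symm]
        rw [Finset.sum_const, Finset.card_erase_of_mem (Finset.mem_univ i), Finset.card_univ,
          Fintype.card_fin, nsmul_eq_mul, Nat.cast_sub hN]
        norm_num
      rw [this]; ring
    rw [Finset.sum_congr rfl fun i _ => key i, Finset.sum_const, Finset.card_univ,
      Fintype.card_fin, nsmul_eq_mul]
  have hcs := real_inner_mul_inner_self_le x s
  rw [h1, h2, hxx, one_mul] at hcs
  rw [le_div_iff₀ hNpos]
  nlinarith [hcs, hNpos, sq_nonneg r]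
end
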